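/- Let $B$ be an $n \times (n+1)$ integer matrix, with columns indexed by $0,1,\dots,n$, such that $B$ has rank $n$ over $\mathbb{Q}$ and such that for every column $j$ the sum of the absolute values of the entries in that column is at most $3$. Let $\nu = (\nu_0,\dots,\nu_n) \in \mathbb{Z}^{n+1}$ be a nonzero integer vector with $B\nu = 0$ whose entries have greatest common divisor $1$. Then $|\nu_j| \le 3^n$ for every $j$ with $0 \le j \le n$. -/

import Mathlib

set_option maxHeartbeats 1000000 in
/-- The 1-norm determinant bound: `|det M| ≤ ∏ⱼ ∑ᵢ |M i j|`. -/
lemma abs_det_le_prod_colsum {n : ℕ} (M : Matrix (Fin n) (Fin n) ℤ) :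
    |M.det| ≤ ∏ j, ∑ i, |M i j| := by
  classical
  rw [Matrix.det_apply]
  have h1 : |∑ σ : Equiv.Perm (Fin n), Equiv.Perm.sign σ • ∏ i, M (σ i) i|
      ≤ ∑ σ : Equiv.Perm (Fin n), ∏ i, |M (σ i) i| := by
    refine le_trans (Finset.abs_sum_le_sum_abs _ _) (le_of_eq ?_)
    refine Finset.sum_congr rfl fun σ _ => ?_
    rw [← Finset.abs_prod]
    rcases Int.units_eq_one_or (Equiv.Perm.sign σ) with h | h <;>
      simp [h, Units.smul_def, abs_neg]
  refine h1.trans ?_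
  have h2 : ∏ j, ∑ i, |M i j| = ∑ f : Fin n → Fin n, ∏ j, |M (f j) j| := by
    rw [Finset.prod_univ_sum]
    rw [Fintype.piFinset_univ]
  rw [h2]
  have hinj : Function.Injective (fun σ : Equiv.Perm (Fin n) => (σ : Fin n → Fin n)) :=
    fun a b h => Equiv.ext (congrFun h)
  calc ∑ σ : Equiv.Perm (Fin n), ∏ i, |M (σ i) i|
      = ∑ f ∈ Finset.univ.image (fun σ : Equiv.Perm (Fin n) => (σ : Fin n → Fin n)),
          ∏ j, |M (f j) j| := by
        rw [Finset.sum_image fun a _ b _ h => hinj h]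
    _ ≤ ∑ f : Fin n → Fin n, ∏ j, |M (f j) j| := by
        refine Finset.sum_le_sum_of_subset_of_nonneg (Finset.subset_univ _) ?_
        intro f _ _
        exact Finset.prod_nonneg fun j _ => abs_nonneg _

/-- Laplace expansion: the vector of signed maximal minors lies in the nullspace. -/
lemma laplace_nullvec {n : ℕ} (B : Matrix (Fin n) (Fin (n + 1)) ℤ) (i : Fin n) :
    ∑ j, B i j * ((-1 : ℤ) ^ (j : ℕ) * (B.submatrix id j.succAbove).det) = 0 := by
  classical
  have h0 : (Matrix.of (Fin.cons (B i) B) : Matrix (Fin (n + 1)) (Fin (n + 1)) ℤ).det = 0 := by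
    refine Matrix.det_zero_of_row_eq (i := 0) (j := i.succ) (Fin.succ_ne_zero i).symm ?_
    funext b
    simp [Fin.cons_zero, Fin.cons_succ]
    exact (congrFun (Fin.cons_zero (α := fun _ => Fin (n + 1) → ℤ) (B i) B) b).trans (congrFun (Fin.cons_succ (α := fun _ => Fin (n + 1) → ℤ) (B i) B i) b).symm
  rw [Matrix.det_succ_row_zero] at h0
  rw [← h0]
  refine Finset.sum_congr rfl fun j _ => ?_
  have hsub : (Matrix.of (Fin.cons (B i) B) :
      Matrix (Fin (n + 1)) (Fin (n + 1)) ℤ).submatrix Fin.succ j.succAbove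
      = B.submatrix id j.succAbove := by
    ext a b
    simp [Matrix.submatrix_apply]
    exact congrFun (Fin.cons_succ (α := fun _ => Fin (n + 1) → ℤ) (B i) B a) _
  rw [hsub]
  simp [Matrix.of_apply, Fin.cons_zero]
  refine Eq.trans ?_ (congrArg (fun x => (-1 : ℤ) ^ (j : ℕ) * x * (B.submatrix id j.succAbove).det)
    (congrFun (Fin.cons_zero (α := fun _ => Fin (n + 1) → ℤ) (B i) B) j).symm)
  ring

/-- Let `B` be an `n × (n+1)` integer matrix of rank `n` over `ℚ`, each of whose
columns has entries with absolute values summing to at most `3`.  If `ν` is a nonzero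
integer vector in the null space of `B` whose entries have greatest common divisor `1`,
then every entry of `ν` satisfies `|νⱼ| ≤ 3ⁿ`. -/
theorem nullspace_generator_entry_bound (n : ℕ) (B : Matrix (Fin n) (Fin (n + 1)) ℤ)
    (hrank : (B.map (fun x : ℤ => (x : ℚ))).rank = n)
    (hcol : ∀ j : Fin (n + 1), ∑ i : Fin n, |B i j| ≤ 3)
    (ν : Fin (n + 1) → ℤ) (hν : ν ≠ 0)
    (hnull : B.mulVec ν = 0)
    (hgcd : Finset.univ.gcd ν = 1) :
    ∀ j, |ν j| ≤ 3 ^ n := by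
  classical
  set Bq : Matrix (Fin n) (Fin (n + 1)) ℚ := B.map (fun x : ℤ => (x : ℚ)) with hBq
  set c : Fin (n + 1) → ℤ :=
    fun j => (-1 : ℤ) ^ (j : ℕ) * (B.submatrix id j.succAbove).det with hc
  -- c is in the nullspace of B
  have hcnull : B.mulVec c = 0 := by
    funext i
    simpa [Matrix.mulVec, dotProduct] using laplace_nullvec B i
  -- bound on entries of c
  have hcbound : ∀ j, |c j| ≤ 3 ^ n := by
    intro j
    rw [hc]
    simp only [abs_mul, abs_pow, abs_neg, abs_one, one_pow, one_mul]
    refine (abs_det_le_prod_colsum _).trans ?_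
    calc ∏ k : Fin n, ∑ i, |(B.submatrix id j.succAbove) i k|
        ≤ ∏ _k : Fin n, (3 : ℤ) := by
          refine Finset.prod_le_prod (fun k _ => Finset.sum_nonneg fun i _ => abs_nonneg _)
            (fun k _ => ?_)
          simpa [Matrix.submatrix_apply] using hcol (j.succAbove k)
      _ = 3 ^ n := by simp
  -- cast of vector to ℚ
  have hmapnull : ∀ (v : Fin (n + 1) → ℤ), B.mulVec v = 0 →
      Bq.mulVec (fun j => (v j : ℚ)) = 0 := by
    intro v hv
    funext i
    show (B.map fun x : ℤ => (x : ℚ)).mulVec (fun j => ((v j : ℤ) : ℚ)) i = 0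
    have h := RingHom.map_mulVec (Int.castRingHom ℚ) B v i
    simp only [Int.coe_castRingHom, Function.comp_def] at h
    rw [← h, hv]
    simp
  set νq : Fin (n + 1) → ℚ := fun j => (ν j : ℚ) with hνq
  have hνqnull : Bq.mulVec νq = 0 := hmapnull ν hnull
  have hνqne : νq ≠ 0 := by
    intro h
    apply hν
    funext j
    have := congrFun h j
    simpa [hνq] using this
  -- kernel is spanned by νq
  have hνqker : νq ∈ LinearMap.ker Bq.mulVecLin := by
    rw [LinearMap.mem_ker, Matrix.mulVecLin_apply]; exact hνqnull
  have hker : LinearMap.ker Bq.mulVecLin = Submodule.span ℚ {νq} := by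
    have hle : Submodule.span ℚ {νq} ≤ LinearMap.ker Bq.mulVecLin :=
      Submodule.span_le.mpr (by simpa using hνqker)
    refine (Submodule.eq_of_le_of_finrank_le hle ?_).symm
    have hrn : Module.finrank ℚ (LinearMap.range Bq.mulVecLin) = n := hrank
    have := LinearMap.finrank_range_add_finrank_ker Bq.mulVecLin
    rw [hrn, Module.finrank_pi] at this
    simp only [Fintype.card_fin] at this
    have hkerfr : Module.finrank ℚ (LinearMap.ker Bq.mulVecLin) = 1 := by omega
    rw [hkerfr, finrank_span_singleton hνqne]
  -- find j0 with ν j0 ≠ 0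
  obtain ⟨j0, hj0⟩ : ∃ j0, ν j0 ≠ 0 := by
    by_contra h
    push_neg at h
    exact hν (funext fun j => h j)
  -- the submatrix deleting column j0 has nonzero determinant
  have hAdet : (Bq.submatrix id j0.succAbove).det ≠ 0 := by
    intro hdet
    obtain ⟨w, hw0, hw⟩ := Matrix.exists_mulVec_eq_zero_iff.mpr hdet
    set w' : Fin (n + 1) → ℚ := j0.insertNth 0 w with hw'
    have hw'null : Bq.mulVec w' = 0 := by
      funext i
      have : Bq.mulVec w' i = ∑ j, Bq i j * w' j := rfl
      rw [this, Fin.sum_univ_succAbove (fun j => Bq i j * w' j) j0]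
      simp only [hw', Fin.insertNth_apply_same, Fin.insertNth_apply_succAbove, mul_zero,
        zero_add]
      have : ∑ k : Fin n, Bq i (j0.succAbove k) * w k
          = (Bq.submatrix id j0.succAbove).mulVec w i := rfl
      rw [this, hw]
    have hw'mem : w' ∈ Submodule.span ℚ {νq} := by
      rw [← hker, LinearMap.mem_ker, Matrix.mulVecLin_apply]
      exact hw'null
    obtain ⟨q, hq⟩ := Submodule.mem_span_singleton.mp hw'mem
    have hq0 : q * νq j0 = w' j0 := congrFun hq j0
    rw [hw', Fin.insertNth_apply_same] at hq0
    have hνqj0 : νq j0 ≠ 0 := by simpa [hνq] using hj0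
    have hqz : q = 0 := by
      rcases mul_eq_zero.mp hq0 with h | h
      · exact h
      · exact absurd h hνqj0
    apply hw0
    funext k
    have := congrFun hq (j0.succAbove k)
    rw [hqz] at this
    simpa [hw', Fin.insertNth_apply_succAbove] using this.symm
  -- hence c j0 ≠ 0
  have hcj0 : c j0 ≠ 0 := by
    intro h
    apply hAdet
    have : (Bq.submatrix id j0.succAbove) = (B.submatrix id j0.succAbove).map
        (fun x : ℤ => (x : ℚ)) := rfl
    have hd : (B.submatrix id j0.succAbove).det = 0 := by
      rw [hc] at h
      rcases mul_eq_zero.mp h with h' | h'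
      · exact absurd h' (by positivity)
      · exact h'
    have hmd := RingHom.map_det (Int.castRingHom ℚ) (B.submatrix id j0.succAbove)
    rw [this]
    have : ((B.submatrix id j0.succAbove).map fun x : ℤ => (x : ℚ))
        = (Int.castRingHom ℚ).mapMatrix (B.submatrix id j0.succAbove) := rfl
    rw [this, ← hmd, hd]
    simp
  -- c is a rational multiple of ν
  have hcqnull : Bq.mulVec (fun j => (c j : ℚ)) = 0 := hmapnull c hcnull
  have hcqmem : (fun j => (c j : ℚ)) ∈ Submodule.span ℚ {νq} := by
    rw [← hker, LinearMap.mem_ker, Matrix.mulVecLin_apply]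
    exact hcqnull
  obtain ⟨q, hq⟩ := Submodule.mem_span_singleton.mp hcqmem
  have hqj : ∀ j, q * (ν j : ℚ) = (c j : ℚ) := fun j => congrFun hq j
  -- q has denominator 1
  have hint : ∀ j, (q.den : ℤ) ∣ ν j := by
    intro j
    have h1 : (q.num : ℚ) * (ν j : ℚ) = (c j : ℚ) * (q.den : ℚ) := by
      have hqn : (q.num : ℚ) = q * (q.den : ℚ) := by
        have hd : (q.den : ℚ) ≠ 0 := by exact_mod_cast q.den_nz
        have h := Rat.num_div_den q
        rw [div_eq_iff hd] at h
        exact h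
      rw [hqn, ← hqj j]
      ring
    have h2 : q.num * ν j = c j * (q.den : ℤ) := by exact_mod_cast h1
    have hdvd : (q.den : ℤ) ∣ q.num * ν j := ⟨c j, by rw [h2]; ring⟩
    have hcop : IsCoprime (q.den : ℤ) q.num := by
      rw [Int.isCoprime_iff_gcd_eq_one]
      have hred := q.reduced
      unfold Int.gcd
      simpa using Nat.Coprime.symm hred
    exact hcop.dvd_of_dvd_mul_left hdvd
  have hden1 : q.den = 1 := by
    have : (q.den : ℤ) ∣ Finset.univ.gcd ν :=
      Finset.dvd_gcd fun j _ => hint j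
    rw [hgcd] at this
    have := Int.isUnit_iff.mp (isUnit_of_dvd_one this)
    omega
  have hqnum : (q.num : ℚ) = q := (Rat.den_eq_one_iff q).mp hden1
  -- q ≠ 0
  have hqne : q ≠ 0 := by
    intro h
    apply hcj0
    have := hqj j0
    rw [h, zero_mul] at this
    exact_mod_cast this.symm
  have hmne : q.num ≠ 0 := Rat.num_ne_zero.mpr hqne
  -- integer relation c j = q.num * ν j
  have hrel : ∀ j, c j = q.num * ν j := by
    intro j
    have : (q.num : ℚ) * (ν j : ℚ) = (c j : ℚ) := by rw [hqnum]; exact hqj j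
    exact_mod_cast this.symm
  intro j
  calc |ν j| = 1 * |ν j| := (one_mul _).symm
    _ ≤ |q.num| * |ν j| := by
        exact mul_le_mul_of_nonneg_right (Int.one_le_abs hmne) (abs_nonneg _)
    _ = |c j| := by rw [hrel j, abs_mul]
    _ ≤ 3 ^ n := hcbound j
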